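/- For every nonnegative integer K there exist a positive integer d, a finite connected multigraph (V, E, o, t, inv) with Betti number β = #E/2 − #V + 1, a 1-form x : E → ℝ^d whose set of fluxes along all closed walks equals ℤ^d, a 1-form α : E → ℝ, and minimal forms μ ∈ F(x) and φ ∈ F(α), such that β − (1/2)·#(supp μ ∪ supp φ) = K. (Paper: Proposition 2.2(iv): the difference β − I_{μ,φ}, where I_{μ,φ} = (1/2)·#(supp μ ∪ supp φ), can be any nonnegative integer; stated on the fundamental graph.) -/

import Mathlib

open scoped Classical
open Finset

noncomputable section

/-- The degree of a vertex: the number of oriented edges starting at it. -/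
def mdeg {V E : Type} [Fintype E] (o : E → V) (v : V) : ℕ :=
  (Finset.univ.filter fun e => o e = v).card

/-- The combinatorial magnetic Laplacian `Δ_α`. -/
def magLap {V E : Type} [Fintype E] (o t : E → V) (α : E → ℝ)
    (f : V → ℂ) (v : V) : ℂ :=
  ∑ e ∈ Finset.univ.filter (fun e => o e = v),
    (f v - Complex.exp (Complex.I * (α e : ℂ)) * f (t e))

/-- The fiber magnetic Laplacian `Δ_{m,φ}(θ)`. -/
def fiberLap {V E : Type} [Fintype E] {d : ℕ} (o t : E → V)
    (m : E → Fin d → ℝ) (φ : E → ℝ) (θ : Fin d → ℝ) (f : V → ℂ) (v : V) : ℂ :=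
  (mdeg o v : ℂ) * f v -
    ∑ e ∈ Finset.univ.filter (fun e => o e = v),
      Complex.exp (Complex.I * ((φ e + ∑ i, m e i * θ i : ℝ) : ℂ)) * f (t e)

/-- Standard inner product on `ℂ^V` (conjugate-linear in the first argument). -/
def dotC {V : Type} [Fintype V] (f g : V → ℂ) : ℂ :=
  ∑ v, (starRingEnd ℂ) (f v) * g v

/-- `lam` lists the eigenvalues of the operator `T` on `ℂ^V` in nondecreasing
order, counted with multiplicity (witnessed by an orthonormal eigenbasis). -/
def IsEigList {V : Type} [Fintype V] (T : (V → ℂ) → (V → ℂ))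
    (lam : Fin (Fintype.card V) → ℝ) : Prop :=
  Monotone lam ∧ ∃ u : Fin (Fintype.card V) → (V → ℂ),
    (∀ i j, dotC (u i) (u j) = if i = j then (1 : ℂ) else 0) ∧
    ∀ i, T (u i) = fun v => ((lam i : ℝ) : ℂ) * u i v

/-- A closed walk in the multigraph. -/
def IsClosedWalk {V E : Type} (o t : E → V) {k : ℕ} (c : Fin (k + 1) → E) : Prop :=
  (∀ i : Fin k, t (c i.castSucc) = o (c i.succ)) ∧ t (c (Fin.last k)) = o (c 0)

/-- Two forms have the same flux along every closed walk. -/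
def SameFlux {V E W : Type} [AddCommMonoid W] (o t : E → V) (b b' : E → W) : Prop :=
  ∀ (k : ℕ) (c : Fin (k + 1) → E), IsClosedWalk o t c →
    ∑ i, b (c i) = ∑ i, b' (c i)

/-- Connectivity of the multigraph: any two distinct vertices are the endpoints
of some walk. -/
def MGConnected {V E : Type} (o t : E → V) : Prop :=
  ∀ u v : V, u ≠ v → ∃ (k : ℕ) (c : Fin (k + 1) → E),
    (∀ i : Fin k, t (c i.castSucc) = o (c i.succ)) ∧ o (c 0) = u ∧ t (c (Fin.last k)) = v

/-- The set of fluxes of a form along all closed walks. -/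
def fluxSet {V E W : Type} [AddCommMonoid W] (o t : E → V) (b : E → W) : Set W :=
  {w | ∃ (k : ℕ) (c : Fin (k + 1) → E), IsClosedWalk o t c ∧ ∑ i, b (c i) = w}

/-- The number of oriented edges in the support of a form. -/
def suppCard {E : Type} [Fintype E] {W : Type} [Zero W] (b : E → W) : ℕ :=
  (Finset.univ.filter fun e => b e ≠ 0).card

/-- The integer lattice `ℤ^d` inside `ℝ^d`. -/
def intLattice (d : ℕ) : Set (Fin d → ℝ) :=
  {w | ∀ i, ∃ z : ℤ, w i = (z : ℝ)}

/-- For every `K ≥ 0` there are `d > 0`, a finite connected multigraph, a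
1-form `x : E → ℝ^d` with flux set `ℤ^d`, a 1-form `α : E → ℝ`, and minimal
forms `μ ∈ F(x)`, `φ ∈ F(α)`, such that
`β − (1/2)·#(supp μ ∪ supp φ) = K`, where `β = #E/2 − #V + 1`. -/

def egInv (K : ℕ) : Fin (2*K+2) → Fin (2*K+2) := fun e =>
  if h : e.val % 2 = 0 then ⟨e.val + 1, by omega⟩ else ⟨e.val - 1, by omega⟩

def egY (K : ℕ) : Fin (2*K+2) → ℤ := fun e =>
  if e.val = 0 then 1 else if e.val = 1 then -1 else 0

lemma egInv_val (K : ℕ) (e : Fin (2*K+2)) :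
    (egInv K e).val = if e.val % 2 = 0 then e.val + 1 else e.val - 1 := by
  unfold egInv; split <;> simp_all

lemma egInv_ne (K : ℕ) (e : Fin (2*K+2)) : egInv K e ≠ e := by
  intro h
  have := congrArg Fin.val h
  rw [egInv_val] at this
  split at this <;> omega

lemma egInv_invol (K : ℕ) (e : Fin (2*K+2)) : egInv K (egInv K e) = e := by
  apply Fin.ext
  rw [egInv_val, egInv_val]
  have := e.2
  split_ifs <;> omega

lemma egY_inv (K : ℕ) (e : Fin (2*K+2)) : egY K (egInv K e) = - egY K e := by
  have hv := egInv_val K e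
  unfold egY
  rcases e with ⟨v, hlt⟩
  match v with
  | 0 => rw [hv]; simp
  | 1 => simp at hv ⊢; omega
  | n+2 =>
    simp only [Fin.val_mk] at hv
    have h1 : (egInv K ⟨n+2, hlt⟩).val ≠ 0 := by rw [hv]; split <;> omega
    have h2 : (egInv K ⟨n+2, hlt⟩).val ≠ 1 := by rw [hv]; split <;> omega
    simp [h1, h2]


lemma sum_const_fn {n : ℕ} {e : Fin 1 → ℝ} : ∑ _i : Fin n, e = n • e := by
  simp

lemma walk_flux (K : ℕ) (z : ℤ) :
    ∃ (k : ℕ) (c : Fin (k + 1) → Fin (2*K+2)),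
      IsClosedWalk (fun _ => (0 : Fin 1)) (fun _ => (0 : Fin 1)) c ∧
      (∑ i, (fun _ : Fin 1 => ((egY K (c i) : ℝ)))) = fun _ => (z : ℝ) := by
  have e0 : Fin (2*K+2) := ⟨0, by omega⟩
  rcases z with n | n
  · match n with
    | 0 =>
      refine ⟨1, ![⟨0, by omega⟩, ⟨1, by omega⟩], ⟨fun i => rfl, rfl⟩, ?_⟩
      funext j
      rw [Finset.sum_apply]
      simp [Fin.sum_univ_two, egY]
    | Nat.succ m =>
      refine ⟨m, fun _ => ⟨0, by omega⟩, ⟨fun i => rfl, rfl⟩, ?_⟩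
      funext j
      rw [Finset.sum_apply]
      simp [egY]
  · refine ⟨n, fun _ => ⟨1, by omega⟩, ⟨fun i => rfl, rfl⟩, ?_⟩
    funext j
    rw [Finset.sum_apply]
    simp [egY, Int.negSucc_eq]

lemma card_filter_pair {n : ℕ} (p : Fin n → Prop) [DecidablePred p] (a b : Fin n)
    (hab : a ≠ b) (h : ∀ e, p e ↔ e = a ∨ e = b) :
    (Finset.univ.filter p).card = 2 := by
  have : Finset.univ.filter p = {a, b} := by
    ext e
    simp only [Finset.mem_filter, Finset.mem_univ, true_and, Finset.mem_insert,
      Finset.mem_singleton]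
    exact h e
  rw [this, Finset.card_insert_of_notMem (by simpa using hab), Finset.card_singleton]

lemma two_le_card_filter {n : ℕ} (p : Fin n → Prop) [DecidablePred p] (a b : Fin n)
    (hab : a ≠ b) (ha : p a) (hb : p b) : 2 ≤ (Finset.univ.filter p).card := by
  have hsub : ({a, b} : Finset (Fin n)) ⊆ Finset.univ.filter p := by
    intro e he
    simp only [Finset.mem_insert, Finset.mem_singleton] at he
    simp only [Finset.mem_filter, Finset.mem_univ, true_and]
    rcases he with rfl | rfl
    · exact ha
    · exact hb
  have := Finset.card_le_card hsub
  rwa [Finset.card_insert_of_notMem (by simpa using hab), Finset.card_singleton] at this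

theorem exists_graph_with_prescribed_joint_invariant_gap (K : ℕ) :
    ∃ (d nv ne : ℕ) (o t : Fin ne → Fin nv) (inv : Fin ne → Fin ne),
      0 < d ∧ 0 < nv ∧
      (∀ e, inv e ≠ e) ∧ (∀ e, inv (inv e) = e) ∧
      (∀ e, o (inv e) = t e) ∧ (∀ e, t (inv e) = o e) ∧
      MGConnected o t ∧
      ∃ (x : Fin ne → Fin d → ℝ) (α : Fin ne → ℝ),
        (∀ e, x (inv e) = - x e) ∧ (∀ e, α (inv e) = - α e) ∧
        fluxSet o t x = intLattice d ∧
        ∃ (μ : Fin ne → Fin d → ℝ) (φ : Fin ne → ℝ),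
          (∀ e, μ (inv e) = - μ e) ∧ SameFlux o t x μ ∧
          (∀ b : Fin ne → Fin d → ℝ, (∀ e, b (inv e) = - b e) → SameFlux o t x b →
            suppCard μ ≤ suppCard b) ∧
          (∀ e, φ (inv e) = - φ e) ∧ SameFlux o t α φ ∧
          (∀ b : Fin ne → ℝ, (∀ e, b (inv e) = - b e) → SameFlux o t α b →
            suppCard φ ≤ suppCard b) ∧
          ((((Finset.univ.filter fun e => μ e ≠ 0) ∪
              (Finset.univ.filter fun e => φ e ≠ 0)).card : ℤ)
            = (ne : ℤ) - 2 * nv + 2 - 2 * K) := by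
  classical
  refine ⟨1, 1, 2*K+2, (fun _ => 0), (fun _ => 0), egInv K,
    Nat.one_pos, Nat.one_pos, egInv_ne K, egInv_invol K,
    (fun _ => rfl), (fun _ => rfl), ?_, ?_⟩
  · intro u v huv; exact absurd (Subsingleton.elim u v) huv
  have he01 : (⟨0, by omega⟩ : Fin (2*K+2)) ≠ ⟨1, by omega⟩ := by
    simp [Fin.ext_iff]
  have hinv0 : egInv K ⟨0, by omega⟩ = (⟨1, by omega⟩ : Fin (2*K+2)) := by
    apply Fin.ext; rw [egInv_val]; simp
  have hne : ∀ e : Fin (2*K+2),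
      ((fun _ : Fin 1 => ((egY K e : ℝ))) ≠ 0) ↔
        (e = ⟨0, by omega⟩ ∨ e = ⟨1, by omega⟩) := by
    intro e
    have h1 : ((fun _ : Fin 1 => ((egY K e : ℝ))) ≠ 0) ↔ egY K e ≠ 0 := by
      simp [funext_iff, Fin.forall_fin_one]
    rw [h1]
    unfold egY
    rcases e with ⟨v, hv⟩
    simp only [Fin.ext_iff, Fin.val_mk]
    split_ifs <;> simp <;> omega
  have hfilt : (Finset.univ.filter fun e : Fin (2*K+2) =>
      (fun _ : Fin 1 => ((egY K e : ℝ))) ≠ 0) =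
      {⟨0, by omega⟩, ⟨1, by omega⟩} := by
    ext e
    simp only [Finset.mem_filter, Finset.mem_univ, true_and, Finset.mem_insert,
      Finset.mem_singleton]
    exact hne e
  have hmincard : ∀ b : Fin (2*K+2) → Fin 1 → ℝ,
      (∀ e, b (egInv K e) = - b e) →
      SameFlux (fun _ => (0 : Fin 1)) (fun _ => (0 : Fin 1))
        (fun e _ => ((egY K e : ℝ))) b →
      2 ≤ suppCard b := by
    intro b hbinv hbf
    have hwalk := hbf 0 (fun _ => ⟨0, by omega⟩) ⟨fun i => rfl, rfl⟩
    have h0 : b ⟨0, by omega⟩ 0 = 1 := by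
      have h := congrFun hwalk.symm 0
      simpa [Finset.sum_apply, egY] using h
    have hb0 : b ⟨0, by omega⟩ ≠ 0 := by
      intro h
      rw [h] at h0
      simp at h0
    have hb1 : b ⟨1, by omega⟩ ≠ 0 := by
      rw [← hinv0, hbinv]
      simpa using hb0
    have hsub : ({⟨0, by omega⟩, ⟨1, by omega⟩} : Finset (Fin (2*K+2))) ⊆
        Finset.univ.filter fun e => b e ≠ 0 := by
      intro e he
      simp only [Finset.mem_insert, Finset.mem_singleton] at he
      simp only [Finset.mem_filter, Finset.mem_univ, true_and]
      rcases he with rfl | rfl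
      · exact hb0
      · exact hb1
    have hle := Finset.card_le_card hsub
    unfold suppCard
    have := two_le_card_filter (fun e => b e ≠ 0) ⟨0, by omega⟩ ⟨1, by omega⟩ he01 hb0 hb1
    convert this using 2
    ext e
    simp
  refine ⟨(fun e _ => ((egY K e : ℝ))), (fun _ => 0), ?_, (fun e => by simp), ?_,
    (fun e _ => ((egY K e : ℝ))), (fun _ => 0), ?_, (fun k c _ => rfl), ?_,
    (fun e => by simp), (fun k c _ => rfl), ?_, ?_⟩
  · intro e; funext j; have := egY_inv K e; push_cast [this]; simp
  · ext w
    constructor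
    · rintro ⟨k, c, _, rfl⟩
      intro i
      refine ⟨∑ j, egY K (c j), ?_⟩
      rw [Finset.sum_apply]
      push_cast
      rfl
    · intro hw
      obtain ⟨z, hz⟩ := hw 0
      obtain ⟨k, c, hc, hs⟩ := walk_flux K z
      refine ⟨k, c, hc, ?_⟩
      rw [hs]
      funext i
      rw [Subsingleton.elim i 0, hz]
  · intro e; funext j; have := egY_inv K e; push_cast [this]; simp
  · intro b hbinv hbf
    have h2 := hmincard b hbinv hbf
    have hμ : suppCard (fun e (_ : Fin 1) => ((egY K e : ℝ))) = 2 := by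
      unfold suppCard
      beta_reduce
      have := card_filter_pair (fun e : Fin (2*K+2) =>
        (fun _ : Fin 1 => ((egY K e : ℝ))) ≠ 0) ⟨0, by omega⟩ ⟨1, by omega⟩ he01 hne
      convert this using 2
      ext e
      simp
    rw [hμ]; exact h2
  · intro b _ _
    unfold suppCard
    simp
  · beta_reduce
    have hemp : (Finset.univ.filter fun _ : Fin (2*K+2) => (0:ℝ) ≠ 0) = ∅ :=
      Finset.filter_false_of_mem (fun e _ h => h rfl)
    have hcard : ((Finset.univ.filter fun e : Fin (2*K+2) =>
        (fun _ : Fin 1 => ((egY K e : ℝ))) ≠ 0) ∪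
        (Finset.univ.filter fun _ : Fin (2*K+2) => (0:ℝ) ≠ 0)).card = 2 := by
      rw [hemp, Finset.union_empty]
      have := card_filter_pair (fun e : Fin (2*K+2) =>
        (fun _ : Fin 1 => ((egY K e : ℝ))) ≠ 0) ⟨0, by omega⟩ ⟨1, by omega⟩ he01 hne
      convert this using 2
    rw [hcard]
    push_cast
    ring
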